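/- Let p₁* = α p_{d1} + (1-α) p_{d2} and p₂* = p₁* - D_s ê where ê = (p_{d2} - p_{d1})/‖p_{d2} - p_{d1}‖, with α ∈ (0,1), D_s > 0 and D_G = ‖p_{d2} - p_{d1}‖ > 0. Then the Lagrange multiplier μ₁₂* = 2 (a₁₂ᵀ û₁)/‖a₁₂‖², where a₁₂ = -(p₁* - p₂*) and û₁ = -k_p(p₁* - p_{d1}), equals 2 k_p (1-α) D_G / D_s, which is strictly positive. -/

import Mathlib

theorem stmt_12 (k_p D_s α : ℝ) (hkp : 0 < k_p) (hDs : 0 < D_s)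
    (hα : α ∈ Set.Ioo (0:ℝ) 1)
    (pd1 pd2 : EuclideanSpace ℝ (Fin 2)) (hne : pd1 ≠ pd2)
    (D_G : ℝ) (hDG : D_G = ‖pd2 - pd1‖)
    (e : EuclideanSpace ℝ (Fin 2)) (he : e = (D_G)⁻¹ • (pd2 - pd1))
    (p1 p2 : EuclideanSpace ℝ (Fin 2))
    (hp1 : p1 = α • pd1 + (1-α) • pd2) (hp2 : p2 = p1 - D_s • e)
    (a12 u1 : EuclideanSpace ℝ (Fin 2))
    (ha12 : a12 = -(p1 - p2)) (hu1 : u1 = -k_p • (p1 - pd1))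
    (μ : ℝ) (hμ : μ = 2 * (inner ℝ a12 u1 : ℝ) / ‖a12‖^2) :
    μ = 2 * k_p * (1-α) * D_G / D_s ∧ 0 < μ := by
  obtain ⟨hα0, hα1⟩ := hα
  have hDGpos : 0 < D_G := by
    rw [hDG]; exact norm_pos_iff.mpr (sub_ne_zero.mpr (Ne.symm hne))
  have hDGne : D_G ≠ 0 := ne_of_gt hDGpos
  have hne' : ‖e‖ = 1 := by
    rw [he, norm_smul, ← hDG]
    rw [Real.norm_eq_abs, abs_of_pos (inv_pos.mpr hDGpos)]
    field_simp
  have hp1d1 : p1 - pd1 = ((1-α) * D_G) • e := by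
    rw [hp1, he, smul_smul]
    have : (1 - α) * D_G * D_G⁻¹ = 1 - α := by field_simp
    rw [this]
    module
  have ha12' : a12 = (-D_s) • e := by
    rw [ha12, hp2]; module
  have hu1' : u1 = (-(k_p * ((1-α) * D_G))) • e := by
    rw [hu1, hp1d1, smul_smul]; module
  have hee : (inner ℝ e e : ℝ) = 1 := by
    rw [real_inner_self_eq_norm_sq, hne']; norm_num
  have hinner : (inner ℝ a12 u1 : ℝ) = D_s * (k_p * ((1-α) * D_G)) := by
    rw [ha12', hu1', real_inner_smul_left, real_inner_smul_right, hee]; ring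
  have hna : ‖a12‖^2 = D_s^2 := by
    rw [ha12', norm_smul, hne']
    simp [abs_of_pos hDs]
  have hμ' : μ = 2 * k_p * (1-α) * D_G / D_s := by
    rw [hμ, hinner, hna]
    field_simp
  refine ⟨hμ', hμ' ▸ ?_⟩
  have h1α : 0 < 1 - α := by linarith
  apply div_pos _ hDs
  positivity
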